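/- Let K be a compact metrizable space and (f_n) a sequence of continuous {0,1}-valued functions on K with no pointwise convergent subsequence. Then (f_n) has an independent subsequence: there is a subsequence (f_{n_k}) such that for every pair of disjoint finite sets E, F of indices k, the set {x ∈ K : f_{n_k}(x) = 1 for k ∈ E, f_{n_k}(x) = 0 for k ∈ F} is nonempty. -/
import Mathlib

open Filter Topology

namespace Ros

variable {K : Type*}

/-- The set where `f d` takes value 1 (if `ε = true`) or ≠ 1 (if `ε = false`). -/
def side (f : ℕ → K → ℝ) (d : ℕ) : Bool → Set K
  | true => {x | f d x = 1}
  | false => {x | f d x ≠ 1}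

/-- `x` is split by the index set `L`: it takes value 1 infinitely often and ≠ 1
infinitely often along `L`. -/
def split (f : ℕ → K → ℝ) (x : K) (L : Set ℕ) : Prop :=
  {n ∈ L | f n x = 1}.Infinite ∧ {n ∈ L | f n x ≠ 1}.Infinite

def conv (f : ℕ → K → ℝ) (C : Set K) (L : Set ℕ) : Prop := ∀ x ∈ C, ¬ split f x L

def good (f : ℕ → K → ℝ) (C : Set K) (M : Set ℕ) : Prop :=
  ∃ L, L ⊆ M ∧ L.Infinite ∧ conv f C L

lemma split_mono {f : ℕ → K → ℝ} {x : K} {L L' : Set ℕ} (h : L ⊆ L')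
    (hs : split f x L) : split f x L' :=
  ⟨hs.1.mono (fun n hn => ⟨h hn.1, hn.2⟩), hs.2.mono (fun n hn => ⟨h hn.1, hn.2⟩)⟩

lemma split_diff {f : ℕ → K → ℝ} {x : K} {L S : Set ℕ} (hS : S.Finite)
    (hs : split f x L) : split f x (L \ S) :=
  ⟨(hs.1.diff hS).mono (fun n hn => ⟨⟨hn.1.1, hn.2⟩, hn.1.2⟩),
   (hs.2.diff hS).mono (fun n hn => ⟨⟨hn.1.1, hn.2⟩, hn.1.2⟩)⟩

lemma nonempty_of_not_good {f : ℕ → K → ℝ} {C : Set K} {M : Set ℕ}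
    (hM : M.Infinite) (h : ¬ good f C M) : C.Nonempty := by
  rcases C.eq_empty_or_nonempty with hC | hC
  · exact absurd ⟨M, subset_rfl, hM, fun x hx => by simp [hC] at hx⟩ h
  · exact hC

/-- Key step lemma: if finitely many cells are each "not good" (no convergent
subsequence on them), then we can find an index `d` and a further infinite
reservoir such that all children cells are still not good. -/
lemma step (f : ℕ → K → ℝ) {ι : Type} [Finite ι] (c : ι → Set K) (M : Set ℕ)
    (hM : M.Infinite) (hc : ∀ i, ¬ good f (c i) M) :
    ∃ d ∈ M, ∃ M', M' ⊆ M ∧ M'.Infinite ∧ (∀ n ∈ M', d < n) ∧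
      ∀ i ε, ¬ good f (c i ∩ side f d ε) M' := by
  by_contra hcon
  push_neg at hcon
  -- hcon : ∀ d ∈ M, ∀ M', M' ⊆ M → M'.Infinite → (∀ n ∈ M', d < n) →
  --          ∃ i ε, good f (c i ∩ side f d ε) M'
  have hstep : ∀ s : {L : Set ℕ // L ⊆ M ∧ L.Infinite},
      ∃ t : {L : Set ℕ // L ⊆ M ∧ L.Infinite},
        t.1 ⊆ {n ∈ s.1 | sInf s.1 < n} ∧
        ∃ i ε, conv f (c i ∩ side f (sInf s.1) ε) t.1 := by
    rintro ⟨L, hLM, hLinf⟩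
    have hdL : sInf L ∈ L := Nat.sInf_mem hLinf.nonempty
    have hM'eq : {n ∈ L | sInf L < n} = L \ Set.Iic (sInf L) := by
      ext n; simp [Set.mem_Iic, not_le, and_comm]
    have hM'inf : {n ∈ L | sInf L < n}.Infinite := by
      rw [hM'eq]; exact hLinf.diff (Set.finite_Iic _)
    obtain ⟨i, ε, hg⟩ := hcon (sInf L) (hLM hdL) {n ∈ L | sInf L < n}
      (fun n hn => hLM hn.1) hM'inf (fun n hn => hn.2)
    obtain ⟨L', hL'sub, hL'inf, hconv⟩ := hg
    exact ⟨⟨L', hL'sub.trans (fun n hn => hLM hn.1), hL'inf⟩, hL'sub, i, ε, hconv⟩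
  choose nxt hsub hdata using hstep
  choose ii ee hcv using hdata
  set s0 : {L : Set ℕ // L ⊆ M ∧ L.Infinite} := ⟨M, subset_rfl, hM⟩ with hs0
  set seq : ℕ → {L : Set ℕ // L ⊆ M ∧ L.Infinite} := fun k => nxt^[k] s0 with hseqdef
  set d : ℕ → ℕ := fun k => sInf (seq k).1 with hd
  have hseq : ∀ k, seq (k+1) = nxt (seq k) := by
    intro k; simp only [hseqdef]; rw [Function.iterate_succ_apply']
  have hsub' : ∀ k, (seq (k+1)).1 ⊆ {n ∈ (seq k).1 | d k < n} := by
    intro k; rw [hseq]; exact hsub (seq k)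
  have hcv' : ∀ k, conv f (c (ii (seq k)) ∩ side f (d k) (ee (seq k))) (seq (k+1)).1 := by
    intro k
    have := hcv (seq k)
    rw [← hseq] at this
    exact this
  have hdm : ∀ k, d k ∈ (seq k).1 := fun k => Nat.sInf_mem (seq k).2.2.nonempty
  have hmono : ∀ k j, k ≤ j → (seq j).1 ⊆ (seq k).1 := by
    intro k j hkj
    induction j, hkj using Nat.le_induction with
    | base => exact subset_rfl
    | succ j hkj ih => exact fun n hn => ih ((hsub' j hn).1)
  have hdlt : ∀ k, d k < d (k+1) := fun k => (hsub' k (hdm (k+1))).2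
  have hdsm : StrictMono d := strictMono_nat_of_lt_succ hdlt
  obtain ⟨⟨i₀, ε₀⟩, hIfib⟩ :=
    Finite.exists_infinite_fiber (fun k => (ii (seq k), ee (seq k)))
  set I : Set ℕ := (fun k => (ii (seq k), ee (seq k))) ⁻¹' {(i₀, ε₀)} with hI
  have hIinf : I.Infinite := Set.infinite_coe_iff.mp hIfib
  have hIi : ∀ k ∈ I, ii (seq k) = i₀ ∧ ee (seq k) = ε₀ := by
    intro k hk
    have : (ii (seq k), ee (seq k)) = (i₀, ε₀) := hk
    exact ⟨congrArg Prod.fst this, congrArg Prod.snd this⟩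
  apply hc i₀
  refine ⟨d '' I, ?_, hIinf.image (hdsm.injective.injOn), ?_⟩
  · rintro n ⟨k, _, rfl⟩; exact (seq k).2.1 (hdm k)
  · intro x hx hsplit
    by_cases hex : ∃ k ∈ I, x ∈ side f (d k) ε₀
    · obtain ⟨k, hkI, hxs⟩ := hex
      have h1 : ¬ split f x (seq (k+1)).1 := by
        have h2 := hcv' k
        rw [(hIi k hkI).1, (hIi k hkI).2] at h2
        exact h2 x ⟨hx, hxs⟩
      apply h1
      have hfin : (d '' (I ∩ Set.Iic k)).Finite :=
        ((Set.finite_Iic k).inter_of_right I).image d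
      have hsub2 : (d '' I) \ (d '' (I ∩ Set.Iic k)) ⊆ (seq (k+1)).1 := by
        rintro n ⟨⟨j, hjI, rfl⟩, hnot⟩
        have hjk : k < j := by
          by_contra hle
          push_neg at hle
          exact hnot ⟨j, ⟨hjI, hle⟩, rfl⟩
        exact hmono (k+1) j hjk (hdm j)
      exact split_mono hsub2 (split_diff hfin hsplit)
    · push_neg at hex
      cases ε₀ with
      | true =>
        have hempty : {n ∈ d '' I | f n x = 1} = ∅ := by
          ext n
          simp only [Set.mem_setOf_eq, Set.mem_empty_iff_false, iff_false, not_and]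
          rintro ⟨j, hj, rfl⟩ hfx
          exact hex j hj hfx
        exact absurd (hempty ▸ hsplit.1) (by simp)
      | false =>
        have hempty : {n ∈ d '' I | f n x ≠ 1} = ∅ := by
          ext n
          simp only [Set.mem_setOf_eq, Set.mem_empty_iff_false, iff_false, not_and]
          rintro ⟨j, hj, rfl⟩ hfx
          exact hex j hj hfx
        exact absurd (hempty ▸ hsplit.2) (by simp)

def cell (f : ℕ → K → ℝ) (dd : ℕ → ℕ) (k : ℕ) (τ : ℕ → Bool) : Set K :=
  {x | ∀ j < k, x ∈ side f (dd j) (τ j)}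

lemma cell_congr {f : ℕ → K → ℝ} {dd : ℕ → ℕ} {k : ℕ} {τ τ' : ℕ → Bool}
    (h : ∀ j < k, τ j = τ' j) : cell f dd k τ = cell f dd k τ' := by
  ext x
  constructor <;> intro hx j hj
  · rw [← h j hj]; exact hx j hj
  · rw [h j hj]; exact hx j hj

theorem main (f : ℕ → K → ℝ) (hbase : ¬ good f Set.univ Set.univ) :
    ∃ φ : ℕ → ℕ, StrictMono φ ∧ ∀ E F : Finset ℕ, Disjoint E F →
      ∃ x : K, (∀ m ∈ E, f (φ m) x = 1) ∧ (∀ m ∈ F, f (φ m) x ≠ 1) := by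
  classical
  set Inv : ℕ → (ℕ → ℕ) × Set ℕ → Prop := fun k s =>
    s.2.Infinite ∧ (∀ j < k, ∀ n ∈ s.2, s.1 j < n) ∧
    (∀ i j, i < j → j < k → s.1 i < s.1 j) ∧
    (∀ τ : ℕ → Bool, ¬ good f (cell f s.1 k τ) s.2) with hInv
  have key : ∀ k s, Inv k s → ∃ s', Inv (k+1) s' ∧ ∀ j ≠ k, s'.1 j = s.1 j := by
    rintro k ⟨dd, M⟩ ⟨hM, hb, hsm, hg⟩
    obtain ⟨dnew, hdM, M', hM'M, hM'inf, hM'gt, hchild⟩ :=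
      step f (ι := Fin k → Bool)
        (fun v => cell f dd k (fun j => if h : j < k then v ⟨j, h⟩ else false)) M hM
        (fun v => hg _)
    refine ⟨(Function.update dd k dnew, M'), ⟨hM'inf, ?_, ?_, ?_⟩, ?_⟩
    · intro j hj n hn
      show Function.update dd k dnew j < n
      rcases Nat.lt_succ_iff_lt_or_eq.mp hj with hjk | rfl
      · rw [Function.update_of_ne (Nat.ne_of_lt hjk)]
        exact hb j hjk n (hM'M hn)
      · rw [Function.update_self]
        exact hM'gt n hn
    · intro i j hij hjk1
      show Function.update dd k dnew i < Function.update dd k dnew j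
      rcases Nat.lt_succ_iff_lt_or_eq.mp hjk1 with hjk | rfl
      · rw [Function.update_of_ne (Nat.ne_of_lt (hij.trans hjk)),
          Function.update_of_ne (Nat.ne_of_lt hjk)]
        exact hsm i j hij hjk
      · rw [Function.update_of_ne (Nat.ne_of_lt hij), Function.update_self]
        exact hb i hij dnew hdM
    · intro τ
      have hEq : cell f (Function.update dd k dnew) (k+1) τ
          = cell f dd k τ ∩ side f dnew (τ k) := by
        ext x
        simp only [cell, Set.mem_setOf_eq, Set.mem_inter_iff]
        constructor
        · intro hx
          refine ⟨fun j hj => ?_, ?_⟩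
          · have := hx j (hj.trans (Nat.lt_succ_self k))
            rwa [Function.update_of_ne (Nat.ne_of_lt hj)] at this
          · have := hx k (Nat.lt_succ_self k)
            rwa [Function.update_self] at this
        · rintro ⟨hx1, hx2⟩ j hj
          rcases Nat.lt_succ_iff_lt_or_eq.mp hj with hjk | rfl
          · rw [Function.update_of_ne (Nat.ne_of_lt hjk)]
            exact hx1 j hjk
          · rw [Function.update_self]
            exact hx2
      rw [hEq]
      have h2 := hchild (fun j : Fin k => τ j) (τ k)
      have h3 : cell f dd k (fun j => if h : j < k then τ j else false)
          = cell f dd k τ := cell_congr (fun j hj => by simp [hj])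
      rwa [h3] at h2
    · intro j hj
      exact Function.update_of_ne hj dnew dd
  have base : Inv 0 ((fun _ => 0), Set.univ) := by
    refine ⟨Set.infinite_univ, by omega, by omega, fun τ => ?_⟩
    have : cell f (fun _ => 0) 0 τ = Set.univ := by
      ext x; simp [cell]
    rw [this]
    exact hbase
  set g : ℕ → (ℕ → ℕ) × Set ℕ → (ℕ → ℕ) × Set ℕ := fun k s =>
    if h : Inv k s then (key k s h).choose else s with hgdef
  set F : ℕ → (ℕ → ℕ) × Set ℕ := fun k =>
    Nat.rec ((fun _ => 0), Set.univ) (fun k ih => g k ih) k with hFdef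
  have hF0 : F 0 = ((fun _ => 0), Set.univ) := rfl
  have hFs : ∀ k, F (k+1) = g k (F k) := fun k => rfl
  have hFInv : ∀ k, Inv k (F k) := by
    intro k
    induction k with
    | zero => exact base
    | succ k ih =>
      rw [hFs k, hgdef]
      simp only [dif_pos ih]
      exact (key k (F k) ih).choose_spec.1
  have hFc : ∀ k j, j ≠ k → (F (k+1)).1 j = (F k).1 j := by
    intro k j hj
    rw [hFs k, hgdef]
    simp only [dif_pos (hFInv k)]
    exact (key k (F k) (hFInv k)).choose_spec.2 j hj
  set φ : ℕ → ℕ := fun m => (F (m+1)).1 m with hφ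
  have hφa : ∀ k m, m < k → (F k).1 m = φ m := by
    intro k
    induction k with
    | zero => omega
    | succ k ih =>
      intro m hm
      rcases Nat.lt_succ_iff_lt_or_eq.mp hm with hmk | rfl
      · rw [hFc k m (Nat.ne_of_lt hmk)]
        exact ih m hmk
      · rfl
  have hφsm : StrictMono φ := by
    apply strictMono_nat_of_lt_succ
    intro m
    have := (hFInv (m+2)).2.2.1 m (m+1) (Nat.lt_succ_self m) (Nat.lt_succ_self (m+1))
    rwa [hφa (m+2) m (by omega), hφa (m+2) (m+1) (by omega)] at this
  refine ⟨φ, hφsm, ?_⟩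
  intro E Fs hdisj
  set k : ℕ := (E ∪ Fs).sup id + 1 with hk
  have hmk : ∀ m ∈ E ∪ Fs, m < k := by
    intro m hm
    have := Finset.le_sup (f := id) hm
    simp only [id] at this
    omega
  set τ : ℕ → Bool := fun j => decide (j ∈ E) with hτ
  obtain ⟨x, hx⟩ := nonempty_of_not_good (hFInv k).1 ((hFInv k).2.2.2 τ)
  refine ⟨x, ?_, ?_⟩
  · intro m hm
    have hmk' : m < k := hmk m (Finset.mem_union_left _ hm)
    have hxm := hx m hmk'
    rw [hφa k m hmk'] at hxm
    have hτm : τ m = true := by simp [hτ, hm]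
    rw [hτm] at hxm
    exact hxm
  · intro m hm
    have hmk' : m < k := hmk m (Finset.mem_union_right _ hm)
    have hxm := hx m hmk'
    rw [hφa k m hmk'] at hxm
    have hmE : m ∉ E := Finset.disjoint_right.mp hdisj hm
    have hτm : τ m = false := by simp [hτ, hmE]
    rw [hτm] at hxm
    exact hxm

end Ros

theorem stmt12 {K : Type*} [TopologicalSpace K] [CompactSpace K]
    [TopologicalSpace.MetrizableSpace K]
    (f : ℕ → K → ℝ) (hc : ∀ n, Continuous (f n)) (hf : ∀ n x, f n x = 0 ∨ f n x = 1)
    (h : ¬ ∃ φ : ℕ → ℕ, StrictMono φ ∧ ∃ ψ : K → ℝ,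
      ∀ x, Tendsto (fun m => f (φ m) x) atTop (𝓝 (ψ x))) :
    ∃ φ : ℕ → ℕ, StrictMono φ ∧ ∀ E F : Finset ℕ, Disjoint E F →
      ∃ x : K, (∀ m ∈ E, f (φ m) x = 1) ∧ (∀ m ∈ F, f (φ m) x = 0) := by
  classical
  have hbase : ¬ Ros.good f Set.univ Set.univ := by
    rintro ⟨L, -, hLinf, hconv⟩
    apply h
    have hLinf' : (setOf (· ∈ L)).Infinite := hLinf
    refine ⟨Nat.nth (· ∈ L), Nat.nth_strictMono hLinf',
      fun x => if ({n ∈ L | f n x ≠ 1}).Finite then 1 else 0, fun x => ?_⟩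
    have hns := hconv x (Set.mem_univ x)
    by_cases hfin : ({n ∈ L | f n x ≠ 1}).Finite
    · simp only [hfin, if_pos]
      apply Tendsto.congr' _ tendsto_const_nhds
      obtain ⟨B, hB⟩ := hfin.bddAbove
      filter_upwards [eventually_ge_atTop (B + 1)] with m hm
      have h1 : B + 1 ≤ Nat.nth (· ∈ L) m :=
        le_trans hm ((Nat.nth_strictMono hLinf').le_apply)
      have h2 : Nat.nth (· ∈ L) m ∈ L := Nat.nth_mem_of_infinite hLinf' m
      by_contra hne
      have : Nat.nth (· ∈ L) m ≤ B := hB ⟨h2, fun he => hne he.symm⟩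
      omega
    · have hfin2 : ({n ∈ L | f n x = 1}).Finite := by
        by_contra h2
        rw [← Set.not_infinite] at h2 hfin
        push_neg at h2 hfin
        exact hns ⟨h2, hfin⟩
      simp only [hfin, if_neg, not_false_iff]
      apply Tendsto.congr' _ tendsto_const_nhds
      obtain ⟨B, hB⟩ := hfin2.bddAbove
      filter_upwards [eventually_ge_atTop (B + 1)] with m hm
      have h1 : B + 1 ≤ Nat.nth (· ∈ L) m :=
        le_trans hm ((Nat.nth_strictMono hLinf').le_apply)
      have h2 : Nat.nth (· ∈ L) m ∈ L := Nat.nth_mem_of_infinite hLinf' m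
      have h3 : f (Nat.nth (· ∈ L) m) x ≠ 1 := by
        intro he
        have : Nat.nth (· ∈ L) m ≤ B := hB ⟨h2, he⟩
        omega
      exact ((hf _ x).resolve_right h3).symm
  obtain ⟨φ, hsm, hind⟩ := Ros.main f hbase
  refine ⟨φ, hsm, fun E F hd => ?_⟩
  obtain ⟨x, h1, h2⟩ := hind E F hd
  exact ⟨x, h1, fun m hm => (hf (φ m) x).resolve_right (h2 m hm)⟩
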